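/- Let m, n, r be positive integers, let A be a real m×n matrix, U a real m×r matrix, V a real n×r matrix, B a real m×r matrix, and C a real n×r matrix, and let ψ be a real number such that λ_min(U·Uᵀ) + λ_min(V·Vᵀ) ≥ ψ². Then, with ⟨X,Y⟩_F = trace(Xᵀ·Y) the Frobenius inner product: −⟨A·V, B⟩_F − ⟨Aᵀ·U, C⟩_F ≤ −(ψ²/2)·‖A‖_F² + (1/2)·‖A·V − B‖_F² + (1/2)·‖Aᵀ·U − C‖_F². -/

import Mathlib

open Matrix BigOperators

/-- Squared Frobenius norm of a real matrix. -/
noncomputable def frobSq {m n : ℕ} (A : Matrix (Fin m) (Fin n) ℝ) : ℝ :=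
  ∑ i, ∑ j, (A i j) ^ 2

/-- Frobenius inner product ⟨X,Y⟩_F = trace(Xᵀ·Y) of real matrices. -/
noncomputable def frobInner {m n : ℕ} (X Y : Matrix (Fin m) (Fin n) ℝ) : ℝ :=
  Matrix.trace (Xᵀ * Y)

lemma frobInner_eq {m n : ℕ} (X Y : Matrix (Fin m) (Fin n) ℝ) :
    frobInner X Y = ∑ i, ∑ j, X i j * Y i j := by
  simp [frobInner, Matrix.trace, Matrix.mul_apply, Matrix.diag]
  exact Finset.sum_comm

lemma frobSq_nonneg {m n : ℕ} (A : Matrix (Fin m) (Fin n) ℝ) : 0 ≤ frobSq A :=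
  Finset.sum_nonneg fun _ _ => Finset.sum_nonneg fun _ _ => sq_nonneg _

lemma polarization {m n : ℕ} (X B : Matrix (Fin m) (Fin n) ℝ) :
    frobSq (X - B) = frobSq X - 2 * frobInner X B + frobSq B := by
  simp only [frobSq, frobInner_eq, Matrix.sub_apply, Finset.mul_sum,
    ← Finset.sum_sub_distrib, ← Finset.sum_add_distrib]
  apply Finset.sum_congr rfl; intro i _
  apply Finset.sum_congr rfl; intro j _
  ring

lemma quad_lower {k : ℕ} (hk : 0 < k) (M : Matrix (Fin k) (Fin k) ℝ)
    (hM : M.IsHermitian) (x : Fin k → ℝ) :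
    (⨅ i, hM.eigenvalues i) * (x ⬝ᵥ x) ≤ x ⬝ᵥ (M *ᵥ x) := by
  have : Nonempty (Fin k) := ⟨⟨0, hk⟩⟩
  set P : Matrix (Fin k) (Fin k) ℝ := (hM.eigenvectorUnitary : Matrix (Fin k) (Fin k) ℝ) with hP
  set y : Fin k → ℝ := Pᵀ *ᵥ x with hy
  have hPstar : star P = Pᵀ := by simp [Matrix.star_eq_conjTranspose, P]
  have hPP : Pᵀ * P = 1 := by
    rw [← hPstar]; exact (Matrix.mem_unitaryGroup_iff').mp hM.eigenvectorUnitary.2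
  have hxx : x ⬝ᵥ x = y ⬝ᵥ y := by
    have hPPt : P * Pᵀ = 1 := mul_eq_one_comm.mp hPP
    rw [hy, Matrix.dotProduct_mulVec, Matrix.vecMul_transpose, Matrix.mulVec_mulVec, hPPt,
      Matrix.one_mulVec]
  have hquad : x ⬝ᵥ (M *ᵥ x) = ∑ i, hM.eigenvalues i * (y i) ^ 2 := by
    conv_lhs => rw [hM.spectral_theorem, Unitary.conjStarAlgAut_apply]
    rw [hPstar, ← hP, ← Matrix.mulVec_mulVec, ← Matrix.mulVec_mulVec,
      Matrix.dotProduct_mulVec, ← Matrix.mulVec_transpose, ← hy]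
    simp [Matrix.mulVec_diagonal, dotProduct, mulVec, Matrix.diagonal]
    exact Finset.sum_congr rfl fun i _ => by ring
  rw [hxx, hquad]
  rw [dotProduct, Finset.mul_sum]
  apply Finset.sum_le_sum
  intro i _
  have h1 : (⨅ j, hM.eigenvalues j) ≤ hM.eigenvalues i := ciInf_le (Finite.bddBelow_range _) i
  nlinarith [sq_nonneg (y i)]

lemma frob_rows {m n r : ℕ} (A : Matrix (Fin m) (Fin n) ℝ) (V : Matrix (Fin n) (Fin r) ℝ) :
    frobSq (A * V) = ∑ i, (A i) ⬝ᵥ ((V * Vᵀ) *ᵥ (A i)) := by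
  simp only [frobSq, Matrix.mul_apply, dotProduct, Matrix.mulVec, Matrix.transpose_apply,
    Finset.mul_sum, Finset.sum_mul]
  apply Finset.sum_congr rfl; intro i _
  simp_rw [sq, Finset.sum_mul_sum]
  rw [Finset.sum_comm]
  apply Finset.sum_congr rfl; intro j _
  rw [Finset.sum_comm]
  apply Finset.sum_congr rfl; intro j' _
  apply Finset.sum_congr rfl; intro kk _
  ring

lemma frobSq_self_rows {m n : ℕ} (A : Matrix (Fin m) (Fin n) ℝ) :
    frobSq A = ∑ i, (A i) ⬝ᵥ (A i) := by
  simp [frobSq, dotProduct, sq]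

lemma frobSq_transpose {m n : ℕ} (A : Matrix (Fin m) (Fin n) ℝ) :
    frobSq Aᵀ = frobSq A := by
  simp only [frobSq, Matrix.transpose_apply]; exact Finset.sum_comm

/-- Key deterministic step of Lemma 6: combining the polarization identity with the
Lemma 1 lower bound λ_min(U·Uᵀ) + λ_min(V·Vᵀ) ≥ ψ². -/
theorem descent_inner_product_bound {m n r : ℕ}
    (hm : 0 < m) (hn : 0 < n) (hr : 0 < r)
    (A : Matrix (Fin m) (Fin n) ℝ)
    (U : Matrix (Fin m) (Fin r) ℝ) (V : Matrix (Fin n) (Fin r) ℝ)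
    (B : Matrix (Fin m) (Fin r) ℝ) (C : Matrix (Fin n) (Fin r) ℝ)
    (hU : (U * Uᵀ).IsHermitian) (hV : (V * Vᵀ).IsHermitian)
    (ψ : ℝ) (hψ : ψ ^ 2 ≤ (⨅ i, hU.eigenvalues i) + (⨅ j, hV.eigenvalues j)) :
    -frobInner (A * V) B - frobInner (Aᵀ * U) C ≤
      -(ψ ^ 2 / 2) * frobSq A + (1 / 2) * frobSq (A * V - B) +
        (1 / 2) * frobSq (Aᵀ * U - C) := by
  have hVlow : (⨅ j, hV.eigenvalues j) * frobSq A ≤ frobSq (A * V) := by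
    rw [frob_rows, frobSq_self_rows, Finset.mul_sum]
    exact Finset.sum_le_sum fun i _ => quad_lower hn _ hV (A i)
  have hUlow : (⨅ i, hU.eigenvalues i) * frobSq A ≤ frobSq (Aᵀ * U) := by
    rw [frob_rows, ← frobSq_transpose A, frobSq_self_rows Aᵀ, Finset.mul_sum]
    exact Finset.sum_le_sum fun j _ => quad_lower hm _ hU (Aᵀ j)
  have hA0 : 0 ≤ frobSq A := frobSq_nonneg A
  have key : ψ ^ 2 * frobSq A ≤ frobSq (A * V) + frobSq (Aᵀ * U) := by
    have := mul_le_mul_of_nonneg_right hψ hA0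
    nlinarith
  have p1 := polarization (A * V) B
  have p2 := polarization (Aᵀ * U) C
  have nB := frobSq_nonneg B
  have nC := frobSq_nonneg C
  nlinarith
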